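/- Let {g_b}_{b∈B} be a finite family of real symmetric matrices indexed by a finite nonempty type, let G = ∑_{b∈B} g_b, and assume G is frustration-free, i.e. λ(G) = ∑_{b∈B} λ(g_b). Then the (unnormalized) L1 adaptive loss bounds the gap negativity from above: ∑_{b∈B} (λ(g_b⁺) − λ(g_b)) ≥ λ(G⁺) − λ(G) ≥ 0. -/

import Mathlib

open Matrix Finset

/-- The largest eigenvalue of a Hermitian matrix. -/
noncomputable def maxEig {𝕜 : Type*} [RCLike 𝕜] {n : Type*} [Fintype n] [DecidableEq n]
    {A : Matrix n n 𝕜} (hA : A.IsHermitian) : ℝ := ⨆ i, hA.eigenvalues i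

/-- The stoquastic of a real matrix: keep the diagonal, take absolute values off-diagonal. -/
def stoq {n : Type*} [DecidableEq n] (A : Matrix n n ℝ) : Matrix n n ℝ :=
  fun i j => if i = j then A i j else |A i j|

lemma stoq_isHermitian {n : Type*} [Fintype n] [DecidableEq n] {A : Matrix n n ℝ}
    (hA : A.IsHermitian) : (stoq A).IsHermitian := by
  ext i j
  by_cases h : i = j
  · subst h; simp [stoq, Matrix.conjTranspose_apply]
  · have := hA.apply i j
    simp only [Matrix.conjTranspose_apply, stoq, h, Ne.symm h, if_false, star_trivial] at *
    rw [this]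

lemma isHermitian_sum {𝕜 : Type*} [RCLike 𝕜] {n B : Type*} [Fintype n] [Fintype B]
    (g : B → Matrix n n 𝕜) (hg : ∀ b, (g b).IsHermitian) : (∑ b, g b).IsHermitian := by
  unfold Matrix.IsHermitian
  rw [Matrix.conjTranspose_sum]
  exact Finset.sum_congr rfl fun b _ => (hg b).eq

section AuxLemmas
variable {n : Type*} [Fintype n] [DecidableEq n]
set_option linter.unusedSectionVars false

lemma star_eq_transpose_real' {U : Matrix n n ℝ} : star U = Uᵀ := by
  ext i j; simp [Matrix.star_eq_conjTranspose, Matrix.conjTranspose_apply]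

/-- Rayleigh quotient bound. -/
lemma rayleigh_le_smul' {A : Matrix n n ℝ} [Nonempty n] (hA : A.IsHermitian) (x : n → ℝ) :
    x ⬝ᵥ A *ᵥ x ≤ maxEig hA * (x ⬝ᵥ x) := by
  set U : Matrix n n ℝ := (hA.eigenvectorUnitary : Matrix n n ℝ) with hU
  set y : n → ℝ := Uᵀ *ᵥ x with hy
  have hUU : U * Uᵀ = 1 := by
    rw [← star_eq_transpose_real']
    exact Matrix.mem_unitaryGroup_iff.mp hA.eigenvectorUnitary.2
  have hyy : y ⬝ᵥ y = x ⬝ᵥ x := by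
    rw [hy]
    calc (Uᵀ *ᵥ x) ⬝ᵥ (Uᵀ *ᵥ x)
        = x ⬝ᵥ (U * Uᵀ) *ᵥ x := by
          rw [← Matrix.mulVec_mulVec, Matrix.dotProduct_mulVec, ← Matrix.mulVec_transpose,
            Matrix.transpose_transpose, dotProduct_comm]
      _ = x ⬝ᵥ x := by rw [hUU, Matrix.one_mulVec]
  have hquad : x ⬝ᵥ A *ᵥ x = ∑ i, hA.eigenvalues i * (y i)^2 := by
    conv_lhs => rw [hA.spectral_theorem, Unitary.conjStarAlgAut_apply, star_eq_transpose_real']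
    rw [← Matrix.mulVec_mulVec, ← Matrix.mulVec_mulVec, Matrix.dotProduct_mulVec (v := x),
      ← Matrix.mulVec_transpose, ← hU, ← hy]
    simp only [Matrix.mulVec_diagonal (v := y), dotProduct, Function.comp_apply,
      RCLike.ofReal_real_eq_id, Function.id_comp, Matrix.mulVec_diagonal]
    exact Finset.sum_congr rfl fun i _ => by ring
  have hle : ∀ i, hA.eigenvalues i * (y i)^2 ≤ maxEig hA * (y i)^2 := fun i =>
    mul_le_mul_of_nonneg_right (le_ciSup (Set.Finite.bddAbove (Set.finite_range _)) i)
      (sq_nonneg _)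
  calc x ⬝ᵥ A *ᵥ x = ∑ i, hA.eigenvalues i * (y i)^2 := hquad
    _ ≤ ∑ i, maxEig hA * (y i)^2 := Finset.sum_le_sum fun i _ => hle i
    _ = maxEig hA * (y ⬝ᵥ y) := by
        rw [← Finset.mul_sum]; congr 1; exact Finset.sum_congr rfl fun i _ => sq (y i)
    _ = _ := by rw [hyy]

/-- Existence of a unit top eigenvector. -/
lemma exists_top_eigenvector' {A : Matrix n n ℝ} [Nonempty n] (hA : A.IsHermitian) :
    ∃ v : n → ℝ, v ⬝ᵥ v = 1 ∧ v ⬝ᵥ A *ᵥ v = maxEig hA := by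
  obtain ⟨i, hi⟩ := Finite.exists_max hA.eigenvalues
  have hsup : maxEig hA = hA.eigenvalues i :=
    le_antisymm (ciSup_le hi) (le_ciSup (Set.Finite.bddAbove (Set.finite_range _)) i)
  have hunit : (fun k => hA.eigenvectorBasis i k) ⬝ᵥ (fun k => hA.eigenvectorBasis i k) = 1 := by
    have h := (orthonormal_iff_ite.mp hA.eigenvectorBasis.orthonormal) i i
    simp only [if_pos rfl, if_true, eq_self_iff_true] at h
    rw [show ((1:ℝ)) = inner ℝ (hA.eigenvectorBasis i) (hA.eigenvectorBasis i) from h.symm]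
    simp [dotProduct, PiLp.inner_apply, RCLike.inner_apply, mul_comm]
    rw [← h, PiLp.inner_apply]
    exact Finset.sum_congr rfl fun x _ => by simp [sq]
  refine ⟨fun k => hA.eigenvectorBasis i k, hunit, ?_⟩
  have hm := hA.mulVec_eigenvectorBasis i
  rw [hsup]
  calc (fun k => hA.eigenvectorBasis i k) ⬝ᵥ A *ᵥ (fun k => hA.eigenvectorBasis i k)
      = (fun k => hA.eigenvectorBasis i k) ⬝ᵥ
          (hA.eigenvalues i • fun k => hA.eigenvectorBasis i k) := by
        rw [show A *ᵥ (fun k => hA.eigenvectorBasis i k)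
          = hA.eigenvalues i • fun k => hA.eigenvectorBasis i k from hm]
    _ = hA.eigenvalues i := by rw [dotProduct_smul, hunit]; simp

/-- Passing to absolute values and the stoquastic only increases the quadratic form. -/
lemma rayleigh_le_stoq_abs' (A : Matrix n n ℝ) (x : n → ℝ) :
    x ⬝ᵥ A *ᵥ x ≤ (fun i => |x i|) ⬝ᵥ stoq A *ᵥ (fun i => |x i|) := by
  simp only [dotProduct, Matrix.mulVec, dotProduct]
  refine Finset.sum_le_sum fun i _ => ?_
  rw [Finset.mul_sum, Finset.mul_sum]
  refine Finset.sum_le_sum fun j _ => ?_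
  by_cases h : i = j
  · subst h
    simp only [stoq, eq_self_iff_true, if_true]
    have h1 : |x i| * (A i i * |x i|) = A i i * (|x i| * |x i|) := by ring
    have h2 : x i * (A i i * x i) = A i i * (x i * x i) := by ring
    rw [h1, h2, abs_mul_abs_self]
  · simp only [stoq, if_neg h]
    calc x i * (A i j * x j) ≤ |x i * (A i j * x j)| := le_abs_self _
      _ = |x i| * (|A i j| * |x j|) := by rw [abs_mul, abs_mul]

lemma abs_dotProduct_self' (x : n → ℝ) :
    (fun i => |x i|) ⬝ᵥ (fun i => |x i|) = x ⬝ᵥ x :=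
  Finset.sum_congr rfl fun _ _ => abs_mul_abs_self _

lemma stoq_stoq' (A : Matrix n n ℝ) : stoq (stoq A) = stoq A := by
  ext i j
  by_cases h : i = j
  · subst h; simp [stoq]
  · simp [stoq, h, abs_abs]

/-- maxEig does not decrease when passing to the stoquastic. -/
lemma maxEig_le_maxEig_stoq' {A : Matrix n n ℝ} [Nonempty n] (hA : A.IsHermitian) :
    maxEig hA ≤ maxEig (stoq_isHermitian hA) := by
  obtain ⟨v, hv1, hv2⟩ := exists_top_eigenvector' hA
  calc maxEig hA = v ⬝ᵥ A *ᵥ v := hv2.symm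
    _ ≤ (fun i => |v i|) ⬝ᵥ stoq A *ᵥ (fun i => |v i|) := rayleigh_le_stoq_abs' A v
    _ ≤ maxEig (stoq_isHermitian hA) * ((fun i => |v i|) ⬝ᵥ (fun i => |v i|)) :=
        rayleigh_le_smul' (stoq_isHermitian hA) _
    _ = maxEig (stoq_isHermitian hA) := by rw [abs_dotProduct_self', hv1, mul_one]

/-- Subadditivity of maxEig of the stoquastic of a sum. -/
lemma maxEig_stoq_sum_le' {B : Type*} [Fintype B] [Nonempty n]
    (g : B → Matrix n n ℝ) (hg : ∀ b, (g b).IsHermitian) :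
    maxEig (stoq_isHermitian (isHermitian_sum g hg)) ≤
      ∑ b, maxEig (stoq_isHermitian (hg b)) := by
  obtain ⟨v, hv1, hv2⟩ := exists_top_eigenvector' (stoq_isHermitian (isHermitian_sum g hg))
  set u : n → ℝ := fun i => |v i| with hu
  have hu1 : u ⬝ᵥ u = 1 := by rw [hu, abs_dotProduct_self', hv1]
  have step1 : maxEig (stoq_isHermitian (isHermitian_sum g hg)) ≤
      u ⬝ᵥ stoq (∑ b, g b) *ᵥ u := by
    calc maxEig (stoq_isHermitian (isHermitian_sum g hg))
        = v ⬝ᵥ stoq (∑ b, g b) *ᵥ v := hv2.symm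
      _ ≤ u ⬝ᵥ stoq (stoq (∑ b, g b)) *ᵥ u := rayleigh_le_stoq_abs' _ v
      _ = u ⬝ᵥ stoq (∑ b, g b) *ᵥ u := by rw [stoq_stoq']
  have step2 : u ⬝ᵥ stoq (∑ b, g b) *ᵥ u ≤ ∑ b, u ⬝ᵥ stoq (g b) *ᵥ u := by
    have hentry : ∀ i j, stoq (∑ b, g b) i j ≤ ∑ b, stoq (g b) i j := by
      intro i j
      by_cases h : i = j
      · subst h
        simp [stoq, Matrix.sum_apply]
      · simp only [stoq, if_neg h]
        rw [Matrix.sum_apply]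
        exact Finset.abs_sum_le_sum_abs _ _
    have hunn : ∀ i, 0 ≤ u i := fun i => abs_nonneg _
    calc u ⬝ᵥ stoq (∑ b, g b) *ᵥ u
        ≤ u ⬝ᵥ (∑ b, stoq (g b)) *ᵥ u := by
          simp only [dotProduct, Matrix.mulVec, dotProduct]
          refine Finset.sum_le_sum fun i _ => ?_
          refine mul_le_mul_of_nonneg_left (Finset.sum_le_sum fun j _ => ?_) (hunn i)
          have := hentry i j
          have h2 : (∑ b, stoq (g b)) i j = ∑ b, stoq (g b) i j := Matrix.sum_apply _ _ _ _
          rw [h2]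
          exact mul_le_mul_of_nonneg_right this (hunn j)
      _ = ∑ b, u ⬝ᵥ stoq (g b) *ᵥ u := by
          have hmv : ((∑ b, stoq (g b)) *ᵥ u) = ∑ b, stoq (g b) *ᵥ u := by
            ext i
            simp only [Matrix.mulVec, dotProduct, Matrix.sum_apply, Finset.sum_mul,
              Finset.sum_apply]
            exact Finset.sum_comm
          rw [hmv]
          simp only [dotProduct, Finset.sum_apply, Finset.mul_sum]
          exact Finset.sum_comm
  have step3 : ∀ b, u ⬝ᵥ stoq (g b) *ᵥ u ≤ maxEig (stoq_isHermitian (hg b)) := by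
    intro b
    calc u ⬝ᵥ stoq (g b) *ᵥ u ≤ maxEig (stoq_isHermitian (hg b)) * (u ⬝ᵥ u) :=
          rayleigh_le_smul' _ _
      _ = maxEig (stoq_isHermitian (hg b)) := by rw [hu1, mul_one]
  calc maxEig (stoq_isHermitian (isHermitian_sum g hg)) ≤ u ⬝ᵥ stoq (∑ b, g b) *ᵥ u := step1
    _ ≤ ∑ b, u ⬝ᵥ stoq (g b) *ᵥ u := step2
    _ ≤ ∑ b, maxEig (stoq_isHermitian (hg b)) := Finset.sum_le_sum fun b _ => step3 b

end AuxLemmas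

/-- **The L1 adaptive loss bounds the gap negativity.** If `G = ∑ b, g b` is
frustration-free, then
`∑ b (λ(g b⁺) − λ(g b)) ≥ λ(G⁺) − λ(G) ≥ 0`. -/
theorem l1AdaptiveLoss_bounds_gapNegativity
    {n B : Type*} [Fintype n] [DecidableEq n] [Nonempty n] [Fintype B]
    (g : B → Matrix n n ℝ) (hg : ∀ b, (g b).IsHermitian)
    (hff : maxEig (isHermitian_sum g hg) = ∑ b, maxEig (hg b)) :
    maxEig (stoq_isHermitian (isHermitian_sum g hg)) - maxEig (isHermitian_sum g hg) ≤
        ∑ b, (maxEig (stoq_isHermitian (hg b)) - maxEig (hg b)) ∧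
      0 ≤ maxEig (stoq_isHermitian (isHermitian_sum g hg)) - maxEig (isHermitian_sum g hg) := by
  constructor
  · rw [Finset.sum_sub_distrib, ← hff]
    have := maxEig_stoq_sum_le' g hg
    linarith
  · have := maxEig_le_maxEig_stoq' (isHermitian_sum g hg)
    linarith
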